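/- Let n ≥ 2 and let σ ≤ τ in P_n^* be wire diagrams with S(σ) = S(τ). Then for every cover relation x ⋖ y in P_n^* with σ ≤ x ⋖ y ≤ τ, the step from x to y is a nesting uncrossing of a crossing of x, and S(x) = S(y). -/
import Mathlib


open Equiv Finset

/-- A candidate wire diagram: a permutation of the `2 n` endpoint positions. -/
abbrev WDperm (n : ℕ) := Equiv.Perm (Fin (2 * n))

/-- `σ` is a wire diagram on `n` wires: a fixed-point-free involution of the `2 n` positions. -/
def IsWD {n : ℕ} (σ : WDperm n) : Prop := (∀ x, σ (σ x) = x) ∧ ∀ x, σ x ≠ x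

instance IsWD.decPred {n : ℕ} : DecidablePred (@IsWD n) := fun σ => by
  unfold IsWD; infer_instance

/-- Positions `a < c` are first endpoints of a pair of crossing wires `{a, σ a}`, `{c, σ c}`,
i.e. `a < c < σ a < σ c`. -/
def IsCrossing {n : ℕ} (σ : WDperm n) (a c : Fin (2 * n)) : Prop :=
  a < c ∧ c < σ a ∧ σ a < σ c

instance IsCrossing.dec {n : ℕ} (σ : WDperm n) (a c : Fin (2 * n)) :
    Decidable (IsCrossing σ a c) := by unfold IsCrossing; infer_instance

/-- The number `c(σ)` of crossings of `σ`. -/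
def ncross {n : ℕ} (σ : WDperm n) : ℕ :=
  (Finset.univ.filter (fun p : Fin (2 * n) × Fin (2 * n) => IsCrossing σ p.1 p.2)).card

/-- The nesting uncrossing of the crossing `{a, σ a}, {c, σ c}` (with `a < c < σ a < σ c`):
replace the pairs `{a,b},{c,d}` by `{a,d},{b,c}` where `b = σ a`, `d = σ c`. -/
def nestU {n : ℕ} (σ : WDperm n) (a c : Fin (2 * n)) : WDperm n :=
  Equiv.swap (σ a) (σ c) * σ * Equiv.swap (σ a) (σ c)

/-- The disjoint uncrossing: replace the pairs `{a,b},{c,d}` by `{a,c},{b,d}`. -/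
def disjU {n : ℕ} (σ : WDperm n) (a c : Fin (2 * n)) : WDperm n :=
  Equiv.swap (σ a) c * σ * Equiv.swap (σ a) c

/-- `τ` is obtained from `σ` by a nesting uncrossing of some crossing of `σ`. -/
def IsNestStep {n : ℕ} (σ τ : WDperm n) : Prop := ∃ a c, IsCrossing σ a c ∧ τ = nestU σ a c

/-- `τ` is obtained from `σ` by a disjoint uncrossing of some crossing of `σ`. -/
def IsDisjStep {n : ℕ} (σ τ : WDperm n) : Prop := ∃ a c, IsCrossing σ a c ∧ τ = disjU σ a c

/-- `τ` is obtained from `σ` by an uncrossing step that decreases the crossing number by one. -/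
def UncCov {n : ℕ} (σ τ : WDperm n) : Prop :=
  (IsNestStep σ τ ∨ IsDisjStep σ τ) ∧ ncross τ + 1 = ncross σ

/-- The dual uncrossing poset `P_n^*`: wire diagrams together with a top element `none = 1̂`
(the adjoined element `0̂` of `P_n`). -/
abbrev PStar (n : ℕ) := Option {σ : WDperm n // IsWD σ}

/-- The covering relation of `P_n^*`. -/
def Cov {n : ℕ} : PStar n → PStar n → Prop
  | some σ, some τ => UncCov σ.1 τ.1
  | some σ, none => ncross σ.1 = 0
  | none, _ => False

/-- The partial order of `P_n^*`: reflexive-transitive closure of the covering relation. -/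
def ple {n : ℕ} : PStar n → PStar n → Prop := Relation.ReflTransGen Cov

/-- The (0-indexed) name `w(σ)(x)` of the wire through position `x`: the number of wires whose
first endpoint is strictly smaller than the first endpoint of the wire through `x`. -/
def word {n : ℕ} (σ : WDperm n) (x : Fin (2 * n)) : ℕ :=
  (Finset.univ.filter (fun a : Fin (2 * n) => a < σ a ∧ a < min x (σ x))).card

/-- The start set `S(σ)`: the set of first endpoints of wires of `σ`. -/
def startSet {n : ℕ} (σ : WDperm n) : Finset (Fin (2 * n)) :=
  Finset.univ.filter (fun a => a < σ a)

/-- The noncrossing pair set `N(σ)` (on 0-indexed wire names): `(i, j)` with `i < j` for each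
nested pair of wires `i < j`, and `(j, i)` for each disjoint pair of wires `i < j`. -/
def NPairs {n : ℕ} (σ : WDperm n) : Set (ℕ × ℕ) :=
  {p | ∃ a c : Fin (2 * n), a < σ a ∧ c < σ c ∧ a < c ∧
        ((σ c < σ a ∧ p = (word σ a, word σ c)) ∨ (σ a < c ∧ p = (word σ c, word σ a)))}

/-- Lexicographic comparison of finsets via their increasing enumerations. -/
def finsetLexLE {m : ℕ} (A B : Finset (Fin m)) : Prop :=
  A = B ∨ List.Lex (· < ·) (A.sort (· ≤ ·)) (B.sort (· ≤ ·))

/-- Labels of the edge labeling: ordered pairs of (0-indexed) wire names, and a label `L`. -/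
inductive Lbl where
  | pair : ℕ → ℕ → Lbl
  | L : Lbl
deriving DecidableEq

/-- The total order `<λ` on labels. -/
def lblLT : Lbl → Lbl → Prop
  | .pair i j, .pair i' j' =>
      if i < j then (if i' < j' then i < i' ∨ (i = i' ∧ j < j') else True)
      else (if i' < j' then False else (j' < j ∨ (j = j' ∧ i' < i)))
  | .pair i j, .L => i < j
  | .L, .pair r s => s < r
  | .L, .L => False

/-- `≤λ` on labels. -/
def lblLE (p q : Lbl) : Prop := p = q ∨ lblLT p q

/-- The sorted list of positions where `σ` and `τ` differ. -/
def diffList {n : ℕ} (σ τ : WDperm n) : List (Fin (2 * n)) :=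
  (Finset.univ.filter (fun x => σ x ≠ τ x)).sort (· ≤ ·)

/-- The edge labeling `λ` of `P_n^*`: an uncrossing of the crossing formed by wires `k < m`
of the lower diagram gets label `(k, m)` if it is the nesting uncrossing and `(m, k)` if it is
the disjoint uncrossing; covers of the top element `1̂ = none` get the label `L`. -/
def lbl {n : ℕ} : PStar n → PStar n → Lbl
  | some σ, some τ =>
      match (diffList σ.1 τ.1)[0]?, (diffList σ.1 τ.1)[1]? with
      | some a, some c =>
          if τ.1 a = σ.1 c then Lbl.pair (word σ.1 a) (word σ.1 c)
          else Lbl.pair (word σ.1 c) (word σ.1 a)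
      | _, _ => Lbl.L
  | _, _ => Lbl.L

/-- `c` is a saturated chain from `u` to `v` in `P_n^*`. -/
def SatChain {n : ℕ} (c : List (PStar n)) (u v : PStar n) : Prop :=
  c.Chain' Cov ∧ c.head? = some u ∧ c.getLast? = some v

/-- The label sequence of a saturated chain. -/
def chainLabels {n : ℕ} (c : List (PStar n)) : List Lbl := c.zipWith lbl c.tail

/-- Lexicographic order on pairs of labels. -/
def pairLexLT (p q : Lbl × Lbl) : Prop := lblLT p.1 q.1 ∨ (p.1 = q.1 ∧ lblLT p.2 q.2)

/-- `x ⋖ y ⋖ z` is a topological ascent: its label pair is lexicographically strictly smaller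
than the label pair of every other saturated chain from `x` to `z`. -/
def TopAscent {n : ℕ} (x y z : PStar n) : Prop :=
  Cov x y ∧ Cov y z ∧ ∀ y' : PStar n, Cov x y' → Cov y' z → y' ≠ y →
    pairLexLT (lbl x y, lbl y z) (lbl x y', lbl y' z)

/-- `x ⋖ y ⋖ z` is a topological descent: a length-two chain that is not a topological ascent. -/
def TopDescent {n : ℕ} (x y z : PStar n) : Prop := Cov x y ∧ Cov y z ∧ ¬ TopAscent x y z

/-- Every length-two subchain of `c` is a topological ascent. -/
def AllTopAscents {n : ℕ} (c : List (PStar n)) : Prop :=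
  ∀ x y z : PStar n, [x, y, z] <:+: c → TopAscent x y z

/-- The number of inversions of a permutation. -/
def numInv {n : ℕ} (π : Equiv.Perm (Fin n)) : ℕ :=
  (Finset.univ.filter (fun p : Fin n × Fin n => p.1 < p.2 ∧ π p.2 < π p.1)).card

/-- One step of the Bruhat order: left multiplication by a transposition raising `inv` by one. -/
def BruhatStep {n : ℕ} (u v : Equiv.Perm (Fin n)) : Prop :=
  (∃ a b : Fin n, a ≠ b ∧ v = Equiv.swap a b * u) ∧ numInv v = numInv u + 1

/-- The Bruhat order on `S_n`. -/
def BruhatLE {n : ℕ} : Equiv.Perm (Fin n) → Equiv.Perm (Fin n) → Prop :=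
  Relation.ReflTransGen BruhatStep

/-- The set of second endpoints of wires of `σ`. -/
def secondEnds {n : ℕ} (σ : WDperm n) : Finset (Fin (2 * n)) :=
  Finset.univ.filter (fun b => σ b < b)

/-- The wire name at the `t`-th (0-indexed) second endpoint. -/
def piVal {n : ℕ} (σ : WDperm n) (t : ℕ) : ℕ :=
  (((secondEnds σ).sort (· ≤ ·))[t]?).elim 0 (word σ)

open Classical in
/-- The permutation `π(σ) ∈ S_n` reading the wire names at the second endpoints of `σ` in
increasing order of position. -/
noncomputable def piPerm {n : ℕ} (σ : WDperm n) : Equiv.Perm (Fin n) :=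
  if h : Function.Bijective (fun t : Fin n =>
      if ht : piVal σ (t : ℕ) < n then (⟨piVal σ (t : ℕ), ht⟩ : Fin n) else t)
  then Equiv.ofBijective _ h else 1

/-- Apply to the crossing at `(a, c)` the nesting (`nest = true`) or disjoint (`nest = false`)
uncrossing. -/
def uncrossAt {n : ℕ} (σ : WDperm n) (a c : Fin (2 * n)) (nest : Bool) : WDperm n :=
  if nest then nestU σ a c else disjU σ a c

section AuxStartSet

variable {n : ℕ}

lemma cross_vals_nest (σ : WDperm n) (hσ : ∀ x, σ (σ x) = x) {a c : Fin (2 * n)}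
    (h : IsCrossing σ a c) (p : Fin (2 * n)) :
    nestU σ a c p =
      if p = a then σ c else if p = σ a then c else if p = c then σ a
      else if p = σ c then a else σ p := by
  obtain ⟨hac, hcb, hbd⟩ := h
  have hba : σ (σ a) = a := hσ a
  have hdc : σ (σ c) = c := hσ c
  have hab : a < σ a := hac.trans hcb
  have hcd : c < σ c := hcb.trans hbd
  have had : a < σ c := hab.trans hbd
  have hinj : Function.Injective σ := σ.injective
  have key : nestU σ a c p = Equiv.swap (σ a) (σ c) (σ (Equiv.swap (σ a) (σ c) p)) := rfl
  rw [key]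
  split_ifs with h1 h2 h3 h4
  · subst h1
    rw [Equiv.swap_apply_of_ne_of_ne hab.ne had.ne, Equiv.swap_apply_left]
  · subst h2
    rw [Equiv.swap_apply_left, hdc, Equiv.swap_apply_of_ne_of_ne hcb.ne hcd.ne]
  · subst h3
    rw [Equiv.swap_apply_of_ne_of_ne hcb.ne hcd.ne, Equiv.swap_apply_right]
  · subst h4
    rw [Equiv.swap_apply_right, hba, Equiv.swap_apply_of_ne_of_ne hab.ne had.ne]
  · have e1 : p ≠ σ a := fun e => h2 e
    have e2 : p ≠ σ c := fun e => h4 e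
    rw [Equiv.swap_apply_of_ne_of_ne e1 e2]
    have f1 : σ p ≠ σ a := fun e => h1 (hinj e)
    have f2 : σ p ≠ σ c := fun e => h3 (hinj e)
    rw [Equiv.swap_apply_of_ne_of_ne f1 f2]

lemma cross_vals_disj (σ : WDperm n) (hσ : ∀ x, σ (σ x) = x) {a c : Fin (2 * n)}
    (h : IsCrossing σ a c) (p : Fin (2 * n)) :
    disjU σ a c p =
      if p = a then c else if p = σ a then σ c else if p = c then a
      else if p = σ c then σ a else σ p := by
  obtain ⟨hac, hcb, hbd⟩ := h
  have hba : σ (σ a) = a := hσ a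
  have hdc : σ (σ c) = c := hσ c
  have hab : a < σ a := hac.trans hcb
  have hcd : c < σ c := hcb.trans hbd
  have had : a < σ c := hab.trans hbd
  have hinj : Function.Injective σ := σ.injective
  have key : disjU σ a c p = Equiv.swap (σ a) c (σ (Equiv.swap (σ a) c p)) := rfl
  rw [key]
  split_ifs with h1 h2 h3 h4
  · subst h1
    rw [Equiv.swap_apply_of_ne_of_ne hab.ne hac.ne, Equiv.swap_apply_left]
  · subst h2
    rw [Equiv.swap_apply_left, Equiv.swap_apply_of_ne_of_ne (hbd.trans_le le_rfl).ne' hcd.ne']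
  · subst h3
    rw [Equiv.swap_apply_right, hba, Equiv.swap_apply_of_ne_of_ne hab.ne hac.ne]
  · subst h4
    rw [Equiv.swap_apply_of_ne_of_ne (hbd).ne' (hcd).ne', hdc, Equiv.swap_apply_right]
  · have e1 : p ≠ σ a := fun e => h2 e
    have e2 : p ≠ c := fun e => h3 e
    rw [Equiv.swap_apply_of_ne_of_ne e1 e2]
    have f1 : σ p ≠ σ a := fun e => h1 (hinj e)
    have f2 : σ p ≠ c := fun e => h4 (by rw [← hdc] at e; exact hinj e)
    rw [Equiv.swap_apply_of_ne_of_ne f1 f2]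

lemma startSet_nestU (σ : WDperm n) (hσ : ∀ x, σ (σ x) = x) {a c : Fin (2 * n)}
    (h : IsCrossing σ a c) : startSet (nestU σ a c) = startSet σ := by
  obtain ⟨hac, hcb, hbd⟩ := h
  have hab : a < σ a := hac.trans hcb
  have hcd : c < σ c := hcb.trans hbd
  have had : a < σ c := hab.trans hbd
  ext p
  simp only [startSet, Finset.mem_filter, Finset.mem_univ, true_and]
  rw [cross_vals_nest σ hσ ⟨hac, hcb, hbd⟩ p]
  split_ifs with h1 h2 h3 h4
  · subst h1; exact iff_of_true had hab
  · subst h2; rw [hσ a]; exact iff_of_false (not_lt.2 hcb.le) (not_lt.2 hab.le)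
  · subst h3; exact iff_of_true hcb hcd
  · subst h4; rw [hσ c]; exact iff_of_false (not_lt.2 had.le) (not_lt.2 hcd.le)
  · rfl

lemma startSet_disjU (σ : WDperm n) (hσ : ∀ x, σ (σ x) = x) {a c : Fin (2 * n)}
    (h : IsCrossing σ a c) :
    startSet (disjU σ a c) = insert (σ a) ((startSet σ).erase c) := by
  obtain ⟨hac, hcb, hbd⟩ := h
  have hab : a < σ a := hac.trans hcb
  have hcd : c < σ c := hcb.trans hbd
  have had : a < σ c := hab.trans hbd
  have hdc : σ (σ c) = c := hσ c
  ext p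
  simp only [startSet, Finset.mem_filter, Finset.mem_univ, true_and, Finset.mem_insert,
    Finset.mem_erase]
  rw [cross_vals_disj σ hσ ⟨hac, hcb, hbd⟩ p]
  split_ifs with h1 h2 h3 h4
  · subst h1
    exact iff_of_true hac (Or.inr ⟨hac.ne, hab⟩)
  · subst h2
    exact iff_of_true hbd (Or.inl rfl)
  · subst h3
    simp only [not_lt.2 hac.le, false_iff]
    rintro (e | ⟨e, _⟩) <;> [exact absurd e hcb.ne; exact e rfl]
  · subst h4
    have : ¬ σ c < σ a := not_lt.2 hbd.le
    simp only [this, false_iff]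
    rintro (e | ⟨_, e⟩)
    · exact hbd.ne' e
    · rw [hdc] at e; exact absurd e (not_lt.2 hcd.le)
  · constructor
    · intro hp; exact Or.inr ⟨h3, hp⟩
    · rintro (e | ⟨_, e⟩)
      · exact absurd e h2
      · exact e

/-- Sum of the start positions: the monotone statistic. -/
def ssum (σ : WDperm n) : ℕ := ∑ a ∈ startSet σ, (a : ℕ)

lemma ssum_disjU (σ : WDperm n) (hσ : ∀ x, σ (σ x) = x) {a c : Fin (2 * n)}
    (h : IsCrossing σ a c) : ssum σ < ssum (disjU σ a c) := by
  obtain ⟨hac, hcb, hbd⟩ := h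
  have hab : a < σ a := hac.trans hcb
  have hcd : c < σ c := hcb.trans hbd
  have hcS : c ∈ startSet σ := by
    simp [startSet, hcd]
  have hbS : σ a ∉ startSet σ := by
    simp only [startSet, Finset.mem_filter, Finset.mem_univ, true_and, not_lt]
    rw [hσ a]; exact hab.le
  have hbE : σ a ∉ (startSet σ).erase c := fun hx => hbS (Finset.mem_of_mem_erase hx)
  rw [ssum, ssum, startSet_disjU σ hσ ⟨hac, hcb, hbd⟩, Finset.sum_insert hbE,
    ← Finset.add_sum_erase _ _ hcS]
  have : (c : ℕ) < (σ a : ℕ) := hcb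
  omega

lemma ssum_of_cov {α β : {σ : WDperm n // IsWD σ}} (h : Cov (some α) (some β)) :
    ssum α.1 ≤ ssum β.1 := by
  obtain ⟨hstep, -⟩ := h
  rcases hstep with ⟨a, c, hc, he⟩ | ⟨a, c, hc, he⟩
  · rw [ssum, ssum, he, startSet_nestU α.1 α.2.1 hc]
  · rw [he]; exact (ssum_disjU α.1 α.2.1 hc).le

lemma ssum_of_ple {u v : PStar n} (h : ple u v) :
    ∀ α β : {σ : WDperm n // IsWD σ}, u = some α → v = some β → ssum α.1 ≤ ssum β.1 := by
  induction h with
  | refl =>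
    intro α β h1 h2
    rw [h1] at h2
    cases h2
    exact le_rfl
  | @tail b cc hub hbc ih =>
    intro α β hu hv
    subst hv
    match b, hbc with
    | some γ, hbc =>
      exact (ih α γ hu rfl).trans (ssum_of_cov hbc)

end AuxStartSet

/-- If `σ ≤ τ` in `P_n^*` with `S(σ) = S(τ)`, then every cover step `x ⋖ y` inside the
interval `[σ, τ]` is a nesting uncrossing, and it preserves the start set. -/
theorem interval_same_startSet_steps_nesting (n : ℕ) (hn : 2 ≤ n)
    (σ τ x y : {σ : WDperm n // IsWD σ})
    (hστ : ple (some σ) (some τ)) (hS : startSet σ.1 = startSet τ.1)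
    (hσx : ple (some σ) (some x)) (hxy : Cov (some x) (some y))
    (hyτ : ple (some y) (some τ)) :
    IsNestStep x.1 y.1 ∧ startSet x.1 = startSet y.1 := by
  have h1 : ssum σ.1 ≤ ssum x.1 := ssum_of_ple hσx σ x rfl rfl
  have h2 : ssum y.1 ≤ ssum τ.1 := ssum_of_ple hyτ y τ rfl rfl
  have hfτ : ssum τ.1 = ssum σ.1 := by rw [ssum, ssum, hS]
  obtain ⟨hstep, -⟩ := hxy
  rcases hstep with ⟨a, c, hc, he⟩ | ⟨a, c, hc, he⟩
  · exact ⟨⟨a, c, hc, he⟩, by rw [he, startSet_nestU x.1 x.2.1 hc]⟩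
  · have hlt := ssum_disjU x.1 x.2.1 hc
    rw [← he] at hlt
    omega
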